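/- Let φ map S¹ to S¹ holomorphically near S¹ with nonvanishing derivative, and set σ(θ) = log|φ'(e^{iθ})|. Then σ_θθ − (1/2)σ_θ² = −Re(e^{2iθ} S[φ](e^{iθ})) + (1 − |φ'(e^{iθ})|²)/2, where S[φ] is the Schwarzian derivative and subscripts denote derivatives in θ. -/

import Mathlib

open Complex

/-- The Schwarzian derivative `S[f] = (f''/f')' - (1/2)(f''/f')²`. -/
noncomputable def schwarzian (f : ℂ → ℂ) (z : ℂ) : ℂ :=
  deriv (fun w => deriv (deriv f) w / deriv f w) z
    - (deriv (deriv f) z / deriv f z) ^ 2 / 2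

private lemma analyticAt_deriv'' {f : ℂ → ℂ} {x : ℂ} (h : AnalyticAt ℂ f x) :
    AnalyticAt ℂ (deriv f) x := by
  obtain ⟨s, hs, hf⟩ := h.exists_mem_nhds_analyticOnNhd
  exact hf.deriv x (mem_of_mem_nhds hs)

private lemma hasDerivAt_re' {f : ℝ → ℂ} {f' : ℂ} {x : ℝ} (h : HasDerivAt f f' x) :
    HasDerivAt (fun t => (f t).re) f'.re x := by
  exact (Complex.reCLM.hasFDerivAt.comp_hasDerivAt x h)

private lemma hasDerivAt_conj' {f : ℝ → ℂ} {f' : ℂ} {x : ℝ} (h : HasDerivAt f f' x) :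
    HasDerivAt (fun t => (starRingEnd ℂ) (f t)) ((starRingEnd ℂ) f') x := h.star

private lemma circle_hasDerivAt {f : ℂ → ℂ} {f' : ℂ} (θ : ℝ)
    (hf : HasDerivAt f f' (Complex.exp (θ * I))) :
    HasDerivAt (fun t : ℝ => f (Complex.exp (t * I))) (f' * (Complex.exp (θ * I) * I)) θ := by
  have h1 : HasDerivAt (fun t : ℝ => (t : ℂ) * I) I θ := by
    simpa using (hasDerivAt_id θ).ofReal_comp.mul_const I
  have h2 : HasDerivAt (fun t : ℝ => Complex.exp ((t : ℂ) * I)) (Complex.exp (θ * I) * I) θ := by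
    exact (Complex.hasDerivAt_exp ((θ : ℂ) * I)).comp θ h1
  exact hf.comp θ h2

private lemma re_div_two (X : ℂ) : (X / 2).re = X.re / 2 := by
  simp [Complex.div_re, Complex.normSq]

private lemma re_quot (v u : ℂ) (hu : u ≠ 0) :
    (v / u).re = (Complex.normSq u)⁻¹
      * (v * (starRingEnd ℂ) u + u * (starRingEnd ℂ) v).re / 2 := by
  have hne : Complex.normSq u ≠ 0 := by
    simpa [Complex.normSq_eq_norm_sq, ne_eq, pow_eq_zero_iff] using hu
  rw [Complex.div_re]
  simp only [Complex.add_re, Complex.mul_re, Complex.conj_re, Complex.conj_im]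
  field_simp
  ring

/-- For `φ` holomorphic near the unit circle mapping the circle to itself with nonvanishing
derivative, and `σ(θ) = log|φ'(e^{iθ})|`, one has
`σ_θθ − (1/2)σ_θ² = −Re(e^{2iθ} S[φ](e^{iθ})) + (1 − |φ'(e^{iθ})|²)/2`. -/
theorem log_deriv_schwarzian_identity (φ : ℂ → ℂ) (σ : ℝ → ℝ)
    (hφ : ∀ w : ℂ, ‖w‖ = 1 → AnalyticAt ℂ φ w)
    (hmap : ∀ w : ℂ, ‖w‖ = 1 → ‖φ w‖ = 1)
    (hd : ∀ w : ℂ, ‖w‖ = 1 → deriv φ w ≠ 0)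
    (hσ : σ = fun θ : ℝ => Real.log ‖deriv φ (Complex.exp (θ * I))‖)
    (θ : ℝ) :
    deriv (deriv σ) θ - (deriv σ θ) ^ 2 / 2
      = -(Complex.exp (2 * θ * I) * schwarzian φ (Complex.exp (θ * I))).re
        + (1 - (‖deriv φ (Complex.exp (θ * I))‖) ^ 2) / 2 := by
  have habs : ∀ t : ℝ, ‖Complex.exp (t * I)‖ = 1 := by
    intro t; simp [Complex.norm_exp]
  set f1 : ℂ → ℂ := deriv φ with hf1
  set f2 : ℂ → ℂ := deriv f1 with hf2
  set G : ℂ → ℂ := fun z => f2 z / f1 z with hGdef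
  have hAφ : ∀ t : ℝ, AnalyticAt ℂ φ (Complex.exp (t * I)) := fun t => hφ _ (habs t)
  have hA1 : ∀ t : ℝ, AnalyticAt ℂ f1 (Complex.exp (t * I)) := fun t =>
    analyticAt_deriv'' (hAφ t)
  have hA2 : ∀ t : ℝ, AnalyticAt ℂ f2 (Complex.exp (t * I)) := fun t =>
    analyticAt_deriv'' (hA1 t)
  have h1ne : ∀ t : ℝ, f1 (Complex.exp (t * I)) ≠ 0 := fun t => hd _ (habs t)
  have hAG : ∀ t : ℝ, AnalyticAt ℂ G (Complex.exp (t * I)) := fun t =>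
    (hA2 t).div (hA1 t) (h1ne t)
  have hcw : ∀ t : ℝ, HasDerivAt (fun s : ℝ => Complex.exp (s * I))
      (Complex.exp (t * I) * I) t := by
    intro t
    simpa using circle_hasDerivAt t (hasDerivAt_id (Complex.exp ((t : ℝ) * I)))
  have hcφ : ∀ t : ℝ, HasDerivAt (fun s : ℝ => φ (Complex.exp (s * I)))
      (f1 (Complex.exp (t * I)) * (Complex.exp (t * I) * I)) t := fun t =>
    circle_hasDerivAt t ((hAφ t).differentiableAt.hasDerivAt)
  have hcf1 : ∀ t : ℝ, HasDerivAt (fun s : ℝ => f1 (Complex.exp (s * I)))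
      (f2 (Complex.exp (t * I)) * (Complex.exp (t * I) * I)) t := fun t =>
    circle_hasDerivAt t ((hA1 t).differentiableAt.hasDerivAt)
  have hcG : ∀ t : ℝ, HasDerivAt (fun s : ℝ => G (Complex.exp (s * I)))
      (deriv G (Complex.exp (t * I)) * (Complex.exp (t * I) * I)) t := fun t =>
    circle_hasDerivAt t ((hAG t).differentiableAt.hasDerivAt)
  -- first derivative of σ
  have hσ1 : ∀ t : ℝ, HasDerivAt σ
      ((Complex.exp (t * I) * G (Complex.exp (t * I)) * I).re) t := by
    intro t
    have hh := hcf1 t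
    have hprod := hh.mul (hasDerivAt_conj' hh)
    have heq : (fun s : ℝ => Complex.normSq (f1 (Complex.exp (s * I))))
        = fun s : ℝ => (f1 (Complex.exp (s * I))
            * (starRingEnd ℂ) (f1 (Complex.exp (s * I)))).re := by
      funext s; rw [Complex.mul_conj]; simp
    have hN : HasDerivAt (fun s : ℝ => Complex.normSq (f1 (Complex.exp (s * I))))
        ((f2 (Complex.exp (t * I)) * (Complex.exp (t * I) * I)
            * (starRingEnd ℂ) (f1 (Complex.exp (t * I)))
          + f1 (Complex.exp (t * I))
            * (starRingEnd ℂ) (f2 (Complex.exp (t * I)) * (Complex.exp (t * I) * I))).re) t := by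
      rw [heq]; exact hasDerivAt_re' hprod
    have hNpos : (0:ℝ) < Complex.normSq (f1 (Complex.exp (t * I))) :=
      Complex.normSq_pos.2 (h1ne t)
    have hσeq : σ = fun s : ℝ =>
        Real.log (Complex.normSq (f1 (Complex.exp (s * I)))) / 2 := by
      rw [hσ]; funext s
      rw [Complex.normSq_eq_norm_sq, Real.log_pow]
      push_cast; ring
    have hlog := ((Real.hasDerivAt_log (ne_of_gt hNpos)).comp t hN).div_const 2
    rw [hσeq]
    refine hlog.congr_deriv ?_
    have hval : Complex.exp (t * I) * G (Complex.exp (t * I)) * I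
        = (f2 (Complex.exp (t * I)) * (Complex.exp (t * I) * I)) / f1 (Complex.exp (t * I)) := by
      simp only [hGdef]
      field_simp
    rw [hval, re_quot _ _ (h1ne t)]
  have hderivσ : deriv σ = fun t : ℝ =>
      (Complex.exp (t * I) * G (Complex.exp (t * I)) * I).re := by
    funext t; exact (hσ1 t).deriv
  -- second derivative of σ
  have hσ2 : HasDerivAt (fun t : ℝ => (Complex.exp (t * I) * G (Complex.exp (t * I)) * I).re)
      (((Complex.exp (θ * I) * I) * G (Complex.exp (θ * I))
          + Complex.exp (θ * I) * (deriv G (Complex.exp (θ * I)) * (Complex.exp (θ * I) * I)))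
        * I).re θ :=
    hasDerivAt_re' (((hcw θ).mul (hcG θ)).mul_const I)
  have hd2σ : deriv (deriv σ) θ
      = (((Complex.exp (θ * I) * I) * G (Complex.exp (θ * I))
          + Complex.exp (θ * I) * (deriv G (Complex.exp (θ * I)) * (Complex.exp (θ * I) * I)))
        * I).re := by
    rw [hderivσ]; exact hσ2.deriv
  have hd1σ : deriv σ θ = (Complex.exp (θ * I) * G (Complex.exp (θ * I)) * I).re := by
    rw [hderivσ]
  -- circle relation
  have hPconst : (fun t : ℝ => φ (Complex.exp (t * I))
      * (starRingEnd ℂ) (φ (Complex.exp (t * I)))) = fun _ : ℝ => (1:ℂ) := by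
    funext t
    rw [Complex.mul_conj, Complex.normSq_eq_norm_sq, hmap _ (habs t)]
    norm_num
  have hp1 : ∀ t : ℝ, f1 (Complex.exp (t * I)) * (Complex.exp (t * I) * I)
        * (starRingEnd ℂ) (φ (Complex.exp (t * I)))
      + φ (Complex.exp (t * I))
        * (starRingEnd ℂ) (f1 (Complex.exp (t * I)) * (Complex.exp (t * I) * I)) = 0 := by
    intro t
    have h1 := (hcφ t).mul (hasDerivAt_conj' (hcφ t))
    have h2 : HasDerivAt (fun s : ℝ => φ (Complex.exp (s * I))
        * (starRingEnd ℂ) (φ (Complex.exp (s * I)))) 0 t := by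
      rw [hPconst]; exact hasDerivAt_const t 1
    exact h1.unique h2
  -- c is real-valued
  have hcreal : ∀ t : ℝ,
      (starRingEnd ℂ) (Complex.exp (t * I) * f1 (Complex.exp (t * I))
        * (starRingEnd ℂ) (φ (Complex.exp (t * I))))
      = Complex.exp (t * I) * f1 (Complex.exp (t * I))
        * (starRingEnd ℂ) (φ (Complex.exp (t * I))) := by
    intro t
    have h := hp1 t
    set z := Complex.exp (t * I)
    set A1 := f1 z
    set F := φ z
    have hid : A1 * (z * I) * (starRingEnd ℂ) F + F * (starRingEnd ℂ) (A1 * (z * I))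
        = I * (z * A1 * (starRingEnd ℂ) F)
          - I * (starRingEnd ℂ) (z * A1 * (starRingEnd ℂ) F) := by
      simp only [map_mul, Complex.conj_conj, Complex.conj_I]
      ring
    rw [hid] at h
    have h3 : I * ((z * A1 * (starRingEnd ℂ) F)
        - (starRingEnd ℂ) (z * A1 * (starRingEnd ℂ) F)) = I * 0 := by
      rw [mul_zero, mul_sub]; exact h
    have h4 := mul_left_cancel₀ I_ne_zero h3
    have h5 := sub_eq_zero.mp h4
    exact h5.symm
  -- zero function from hp1/hid, differentiated once more
  have hq0 : (fun t : ℝ => I * (Complex.exp (t * I) * f1 (Complex.exp (t * I))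
        * (starRingEnd ℂ) (φ (Complex.exp (t * I))))
      - I * (starRingEnd ℂ) (Complex.exp (t * I) * f1 (Complex.exp (t * I))
        * (starRingEnd ℂ) (φ (Complex.exp (t * I))))) = fun _ : ℝ => (0:ℂ) := by
    funext t
    rw [hcreal t]
    ring
  have hcder : ∀ t : ℝ, HasDerivAt (fun s : ℝ => Complex.exp (s * I) * f1 (Complex.exp (s * I))
        * (starRingEnd ℂ) (φ (Complex.exp (s * I))))
      (((Complex.exp (t * I) * I) * f1 (Complex.exp (t * I))
          + Complex.exp (t * I) * (f2 (Complex.exp (t * I)) * (Complex.exp (t * I) * I)))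
          * (starRingEnd ℂ) (φ (Complex.exp (t * I)))
        + Complex.exp (t * I) * f1 (Complex.exp (t * I))
          * (starRingEnd ℂ) (f1 (Complex.exp (t * I)) * (Complex.exp (t * I) * I))) t :=
    fun t => ((hcw t).mul (hcf1 t)).mul (hasDerivAt_conj' (hcφ t))
  have hc'real : (starRingEnd ℂ) (((Complex.exp (θ * I) * I) * f1 (Complex.exp (θ * I))
          + Complex.exp (θ * I) * (f2 (Complex.exp (θ * I)) * (Complex.exp (θ * I) * I)))
          * (starRingEnd ℂ) (φ (Complex.exp (θ * I)))
        + Complex.exp (θ * I) * f1 (Complex.exp (θ * I))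
          * (starRingEnd ℂ) (f1 (Complex.exp (θ * I)) * (Complex.exp (θ * I) * I)))
      = ((Complex.exp (θ * I) * I) * f1 (Complex.exp (θ * I))
          + Complex.exp (θ * I) * (f2 (Complex.exp (θ * I)) * (Complex.exp (θ * I) * I)))
          * (starRingEnd ℂ) (φ (Complex.exp (θ * I)))
        + Complex.exp (θ * I) * f1 (Complex.exp (θ * I))
          * (starRingEnd ℂ) (f1 (Complex.exp (θ * I)) * (Complex.exp (θ * I) * I)) := by
    have hq := ((hcder θ).const_mul I).sub ((hasDerivAt_conj' (hcder θ)).const_mul I)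
    have hz : HasDerivAt (fun t : ℝ => I * (Complex.exp (t * I) * f1 (Complex.exp (t * I))
        * (starRingEnd ℂ) (φ (Complex.exp (t * I))))
      - I * (starRingEnd ℂ) (Complex.exp (t * I) * f1 (Complex.exp (t * I))
        * (starRingEnd ℂ) (φ (Complex.exp (t * I))))) 0 θ := by
      rw [hq0]; exact hasDerivAt_const θ 0
    have h := hq.unique hz
    have h3 : I * ((((Complex.exp (θ * I) * I) * f1 (Complex.exp (θ * I))
          + Complex.exp (θ * I) * (f2 (Complex.exp (θ * I)) * (Complex.exp (θ * I) * I)))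
          * (starRingEnd ℂ) (φ (Complex.exp (θ * I)))
        + Complex.exp (θ * I) * f1 (Complex.exp (θ * I))
          * (starRingEnd ℂ) (f1 (Complex.exp (θ * I)) * (Complex.exp (θ * I) * I)))
        - (starRingEnd ℂ) (((Complex.exp (θ * I) * I) * f1 (Complex.exp (θ * I))
          + Complex.exp (θ * I) * (f2 (Complex.exp (θ * I)) * (Complex.exp (θ * I) * I)))
          * (starRingEnd ℂ) (φ (Complex.exp (θ * I)))
        + Complex.exp (θ * I) * f1 (Complex.exp (θ * I))
          * (starRingEnd ℂ) (f1 (Complex.exp (θ * I)) * (Complex.exp (θ * I) * I))))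
        = I * 0 := by
      rw [mul_zero, mul_sub]; exact h
    have h4 := mul_left_cancel₀ I_ne_zero h3
    have h5 := sub_eq_zero.mp h4
    exact h5.symm
  -- algebra at θ
  have hcθ0 := hcreal θ
  set z := Complex.exp ((θ:ℝ) * I) with hzdef
  set A1 := f1 z with hA1def
  set A2 := f2 z with hA2def
  set F := φ z with hFdef
  have hFabs : ‖F‖ = 1 := hmap _ (habs θ)
  have hFne : F ≠ 0 := by
    intro h0; rw [h0] at hFabs; simp at hFabs
  have hzz : z * (starRingEnd ℂ) z = 1 := by
    rw [Complex.mul_conj, Complex.normSq_eq_norm_sq, habs θ]; norm_num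
  have hFF : F * (starRingEnd ℂ) F = 1 := by
    rw [Complex.mul_conj, Complex.normSq_eq_norm_sq, hFabs]; norm_num
  have hcθ := hcθ0
  simp only [map_mul, map_add, map_neg, Complex.conj_conj, Complex.conj_I] at hc'real hcθ
  have hkey : z^2 * A2 * (starRingEnd ℂ) F
        + (starRingEnd ℂ) z^2 * (starRingEnd ℂ) A2 * F
      = 2 * (A1 * (starRingEnd ℂ) A1) - 2 * (z * A1 * (starRingEnd ℂ) F) := by
    linear_combination I * hc'real - hcθ + 2*A1*(starRingEnd ℂ) A1 * hzz
      + ((starRingEnd ℂ) z * (starRingEnd ℂ) A1 * F + (starRingEnd ℂ) z^2 * (starRingEnd ℂ) A2 * F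
          + z * A1 * (starRingEnd ℂ) F + z^2 * A2 * (starRingEnd ℂ) F
          - 2 * z * (starRingEnd ℂ) z * A1 * (starRingEnd ℂ) A1) * Complex.I_sq
  have hcsq : (z * A1 * (starRingEnd ℂ) F)^2 = A1 * (starRingEnd ℂ) A1 := by
    have h1 : (z * A1 * (starRingEnd ℂ) F)^2
        = (z * A1 * (starRingEnd ℂ) F) * ((starRingEnd ℂ) (z * A1 * (starRingEnd ℂ) F)) := by
      rw [hcθ0]; ring
    rw [h1]
    simp only [map_mul, Complex.conj_conj]
    linear_combination A1*(starRingEnd ℂ) A1*F*(starRingEnd ℂ) F*hzz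
      + A1*(starRingEnd ℂ) A1*hFF
  have hconjFne : (starRingEnd ℂ) F ≠ 0 := by
    intro h0
    apply hFne
    have := congrArg (starRingEnd ℂ) h0
    simpa using this
  have hcne : z * A1 * (starRingEnd ℂ) F ≠ 0 :=
    mul_ne_zero (mul_ne_zero (Complex.exp_ne_zero _) (h1ne θ)) hconjFne
  set u := z * G z with hudef
  have hA1ne : A1 ≠ 0 := h1ne θ
  have hu : u * (z * A1 * (starRingEnd ℂ) F) = z^2 * A2 * (starRingEnd ℂ) F := by
    rw [hudef]
    simp only [hGdef]
    rw [← hA1def, ← hA2def]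
    field_simp [hA1ne]
  have hcu : (starRingEnd ℂ) u * (z * A1 * (starRingEnd ℂ) F)
      = (starRingEnd ℂ) z^2 * (starRingEnd ℂ) A2 * F := by
    conv_lhs => rw [← hcθ0, ← map_mul, hu]
    simp [map_mul, map_pow, Complex.conj_conj]
  have h4 : (u + (starRingEnd ℂ) u + 2) * (z * A1 * (starRingEnd ℂ) F)
      = 2 * (z * A1 * (starRingEnd ℂ) F)^2 := by
    linear_combination hu + hcu + hkey - 2*hcsq
  have h5 : u + (starRingEnd ℂ) u + 2 = 2 * (z * A1 * (starRingEnd ℂ) F) := by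
    apply mul_right_cancel₀ hcne
    rw [h4]; ring
  have h6 := Complex.add_conj u
  have hceq : z * A1 * (starRingEnd ℂ) F = 1 + (u.re : ℂ) := by
    push_cast at h6
    linear_combination (h6 - h5)/2
  have hns : Complex.normSq A1 = (1 + u.re)^2 := by
    have h7 : ((Complex.normSq A1 : ℝ) : ℂ) = ((1 + u.re : ℝ) : ℂ)^2 := by
      rw [← Complex.mul_conj]
      push_cast
      linear_combination (-1 : ℂ)*hcsq + (z*A1*(starRingEnd ℂ) F + 1 + (u.re:ℂ))*hceq
    exact_mod_cast h7
  -- final assembly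
  rw [hd2σ, hd1σ]
  unfold schwarzian
  rw [← hf1, ← hf2]
  have hexp2 : Complex.exp (2*(θ:ℝ)*I) = z^2 := by
    rw [hzdef, sq, ← Complex.exp_add]; ring_nf
  rw [hexp2, Complex.sq_norm, hns]
  have hQ : A2 / A1 = G z := by rw [hGdef]
  rw [hQ]
  have e1 : ((z*I)*G z + z*(deriv G z*(z*I)))*I = -u - z^2*deriv G z := by
    rw [hudef]
    linear_combination (z*G z + z^2*deriv G z) * Complex.I_sq
  have e2 : z^2*(deriv G z - (G z)^2/2) = z^2*deriv G z - u^2/2 := by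
    rw [hudef]; ring
  rw [e1, e2]
  have e3 : (u^2).re = u.re^2 - u.im^2 := by
    rw [sq, Complex.mul_re]; ring
  simp only [Complex.sub_re, Complex.neg_re, Complex.mul_I_re, re_div_two, e3]
  ring
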